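/- For n ≥ 2, the number of indecomposable meanders on n nodes is 3^(n-1). Equivalently, the number of pairs of compositions (λ, μ) of n whose sets of partial sums intersect only in {n} is 3^(n-1). -/
import Mathlib


/-- The set of partial sums of a list: sums of nonempty prefixes. -/
def PSums (l : List ℕ) : Set ℕ :=
  {m | ∃ k, 0 < k ∧ k ≤ l.length ∧ (l.take k).sum = m}

/-- `l` is a composition of `n`: a list of positive integers summing to `n`. -/
def IsComposition (l : List ℕ) (n : ℕ) : Prop :=
  (∀ x ∈ l, 0 < x) ∧ l.sum = n

lemma psums_mem_bounds {l : List ℕ} {n m : ℕ} (h : IsComposition l n) (hm : m ∈ PSums l) :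
    1 ≤ m ∧ m ≤ n := by
  obtain ⟨k, hk0, hkl, hsum⟩ := hm
  constructor
  · have hne : l.take k ≠ [] := by
      rw [← List.length_pos_iff]
      simp only [List.length_take]
      omega
    obtain ⟨x, hx⟩ := List.exists_mem_of_ne_nil _ hne
    have hx' : x ∈ l := List.mem_of_mem_take hx
    calc 1 ≤ x := h.1 x hx'
      _ ≤ (l.take k).sum := List.single_le_sum (fun y _ => Nat.zero_le y) x hx
      _ = m := hsum
  · rw [← h.2, ← hsum]
    conv_rhs => rw [← List.take_append_drop k l]
    rw [List.sum_append]
    exact Nat.le_add_right _ _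

lemma top_mem_psums {l : List ℕ} {n : ℕ} (h : IsComposition l n) (hn : 1 ≤ n) :
    n ∈ PSums l := by
  refine ⟨l.length, ?_, le_rfl, by simpa using h.2⟩
  rcases l with _ | ⟨a, t⟩
  · exfalso; have := h.2; simp at this; omega
  · simp

/-- The equivalence between compositions of `n` and finsets of `Fin (n-1)`. -/
noncomputable def F (n : ℕ) : Composition n ≃ Finset (Fin (n - 1)) :=
  (compositionEquiv n).trans (compositionAsSetEquiv n)

lemma mem_F_iff {n : ℕ} (c : Composition n) (i : Fin (n - 1)) :
    i ∈ F n c ↔ (1 + (i : ℕ)) ∈ PSums c.blocks := by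
  have hb : c.toCompositionAsSet.blocks = c.blocks := c.toCompositionAsSet_blocks
  have hcard : c.toCompositionAsSet.boundaries.card = c.length + 1 :=
    c.card_boundaries_eq_succ_length
  have hlen : c.blocks.length = c.length := c.blocks_length
  show i ∈ (compositionAsSetEquiv n) c.toCompositionAsSet ↔ _
  simp only [compositionAsSetEquiv, Equiv.coe_fn_mk, Set.mem_toFinset, Set.mem_setOf_eq]
  rw [CompositionAsSet.mem_boundaries_iff_exists_blocks_sum_take_eq]
  rw [hb, hcard]
  constructor
  · rintro ⟨k, hk, hsum⟩
    have hk0 : 0 < k := by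
      rcases Nat.eq_zero_or_pos k with rfl | h
      · simp at hsum
        omega
      · exact h
    exact ⟨k, hk0, by omega, hsum⟩
  · rintro ⟨k, hk0, hkl, hsum⟩
    exact ⟨k, by omega, hsum⟩

lemma isComposition_blocks {n : ℕ} (c : Composition n) : IsComposition c.blocks n :=
  ⟨fun _ hx => c.blocks_pos hx, c.blocks_sum⟩

lemma key {n : ℕ} (hn : 2 ≤ n) (c₁ c₂ : Composition n) :
    PSums c₁.blocks ∩ PSums c₂.blocks = {n} ↔ Disjoint (F n c₁) (F n c₂) := by
  constructor
  · intro h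
    rw [Finset.disjoint_left]
    intro i hi1 hi2
    have h1 := (mem_F_iff c₁ i).1 hi1
    have h2 := (mem_F_iff c₂ i).1 hi2
    have : (1 + (i : ℕ)) ∈ ({n} : Set ℕ) := h ▸ Set.mem_inter h1 h2
    have hi := i.isLt
    simp only [Set.mem_singleton_iff] at this
    omega
  · intro hd
    ext m
    simp only [Set.mem_inter_iff, Set.mem_singleton_iff]
    constructor
    · rintro ⟨h1, h2⟩
      have b1 := psums_mem_bounds (isComposition_blocks c₁) h1
      have b2 := psums_mem_bounds (isComposition_blocks c₂) h2
      by_contra hmn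
      have hlt : m < n := by omega
      set i : Fin (n - 1) := ⟨m - 1, by omega⟩ with hi
      have him : 1 + (i : ℕ) = m := by simp [hi]; omega
      have hi1 : i ∈ F n c₁ := (mem_F_iff c₁ i).2 (him ▸ h1)
      have hi2 : i ∈ F n c₂ := (mem_F_iff c₂ i).2 (him ▸ h2)
      exact Finset.disjoint_left.1 hd hi1 hi2
    · rintro rfl
      exact ⟨top_mem_psums (isComposition_blocks c₁) (by omega),
        top_mem_psums (isComposition_blocks c₂) (by omega)⟩

noncomputable def mainEquiv (n : ℕ) (hn : 2 ≤ n) :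
    {p : List ℕ × List ℕ | IsComposition p.1 n ∧ IsComposition p.2 n ∧
      PSums p.1 ∩ PSums p.2 = {n}} ≃
    {p : Composition n × Composition n // Disjoint (F n p.1) (F n p.2)} where
  toFun p := ⟨(⟨p.1.1, fun {i} hi => p.2.1.1 i hi, p.2.1.2⟩,
               ⟨p.1.2, fun {i} hi => p.2.2.1.1 i hi, p.2.2.1.2⟩),
    (key hn _ _).1 p.2.2.2⟩
  invFun c := ⟨(c.1.1.blocks, c.1.2.blocks),
    ⟨isComposition_blocks c.1.1, isComposition_blocks c.1.2, (key hn _ _).2 c.2⟩⟩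
  left_inv _ := rfl
  right_inv _ := rfl

def disjEquiv (m : ℕ) :
    {q : Finset (Fin m) × Finset (Fin m) // Disjoint q.1 q.2} ≃ (Fin m → Fin 3) where
  toFun q x := if x ∈ q.1.1 then 0 else if x ∈ q.1.2 then 1 else 2
  invFun f := ⟨(Finset.univ.filter (fun x => f x = 0), Finset.univ.filter (fun x => f x = 1)), by
    rw [Finset.disjoint_left]
    intro a ha hb
    simp only [Finset.mem_filter, Finset.mem_univ, true_and] at ha hb
    rw [ha] at hb
    exact absurd hb (by decide)⟩
  left_inv q := by
    obtain ⟨⟨A, B⟩, hq⟩ := q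
    have hd := Finset.disjoint_left.1 hq
    apply Subtype.ext
    dsimp only
    congr 1 <;> ext x <;> simp only [Finset.mem_filter, Finset.mem_univ, true_and] <;>
      split_ifs with h1 h2 <;> simp_all
  right_inv f := by
    funext x
    dsimp only
    simp only [Finset.mem_filter, Finset.mem_univ, true_and]
    split_ifs with h1 h2
    · exact h1.symm
    · exact h2.symm
    · have h3 := (f x).isLt
      rw [Fin.ext_iff] at h1 h2 ⊢
      simp only [Fin.val_zero, Fin.val_one] at h1 h2
      omega

/-- For `n ≥ 2`, the number of indecomposable meanders on `n` nodes, i.e. pairs of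
compositions of `n` whose sets of partial sums intersect only in `{n}`, is `3^(n-1)`. -/
theorem stmt0 (n : ℕ) (hn : 2 ≤ n) :
    {p : List ℕ × List ℕ | IsComposition p.1 n ∧ IsComposition p.2 n ∧
      PSums p.1 ∩ PSums p.2 = {n}}.ncard = 3 ^ (n - 1) := by
  have e := (mainEquiv n hn).trans
    ((Equiv.subtypeEquiv ((F n).prodCongr (F n)) (fun p => Iff.rfl)).trans (disjEquiv (n - 1)))
  rw [← Nat.card_coe_set_eq, Nat.card_congr e, Nat.card_eq_fintype_card]
  simp
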